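/- Let C ≥ 2 and 1 ≤ K ≤ C−1 be integers, let ℓ : ℝ → ℝ be strictly decreasing, let η ∈ ℝ^C, and let y1 ≠ y2 be labels with η_{y1} > η_{y2}. Let s ∈ ℝ^C satisfy s_{y1} > s_{y2}, and let s' ∈ ℝ^C be obtained from s by swapping its y1-th and y2-th coordinates. Then K·(R_K^ℓ(s, η) − R_K^ℓ(s', η)) = (η_{y1} − η_{y2}) · Σ_{k=1}^{K+1} [ℓ(s_{y1} − s_[k]) − ℓ(s_{y2} − s_[k])]; in particular R_K^ℓ(s, η) < R_K^ℓ(s', η). -/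

import Mathlib

/-- The `k`-th largest entry (1-indexed, counted with multiplicity) of `s ∈ ℝ^C`. -/
noncomputable def kthLargest {C : ℕ} (s : Fin C → ℝ) (k : ℕ) : ℝ :=
  ((List.ofFn s).insertionSort (· ≤ ·)).getD (C - k) 0

/-- The conditional surrogate AUTKC risk
`R_K^ℓ(s, η) = Σ_y η_y · (1/K) Σ_{k=1}^{K+1} ℓ(s_y − s_[k])`. -/
noncomputable def surrRisk {C : ℕ} (K : ℕ) (ℓ : ℝ → ℝ) (η s : Fin C → ℝ) : ℝ :=
  ∑ y : Fin C, η y * ((1 / (K : ℝ)) *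
    ∑ k ∈ Finset.Icc 1 (K + 1), ℓ (s y - kthLargest s k))

lemma kthLargest_comp_perm {C : ℕ} (s : Fin C → ℝ) (σ : Equiv.Perm (Fin C)) (k : ℕ) :
    kthLargest (s ∘ σ) k = kthLargest s k := by
  unfold kthLargest
  congr 1
  exact List.Perm.eq_of_pairwise'
    (List.pairwise_insertionSort _ _) (List.pairwise_insertionSort _ _)
    ((List.perm_insertionSort (· ≤ ·) _).trans ((σ.ofFn_comp_perm s).trans
      (List.perm_insertionSort (· ≤ ·) _).symm))

/-- The swap identity in the consistency proof: if `η_{y1} > η_{y2}`, `s_{y1} > s_{y2}`,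
and `s'` is obtained from `s` by swapping its `y1`-th and `y2`-th coordinates, then
`K·(R_K^ℓ(s, η) − R_K^ℓ(s', η))
  = (η_{y1} − η_{y2}) · Σ_{k=1}^{K+1} [ℓ(s_{y1} − s_[k]) − ℓ(s_{y2} − s_[k])]`,
and in particular `R_K^ℓ(s, η) < R_K^ℓ(s', η)`. -/
theorem surrogate_risk_swap
    (C K : ℕ) (hC : 2 ≤ C) (hK1 : 1 ≤ K) (hKC : K + 1 ≤ C)
    (ℓ : ℝ → ℝ) (hanti : StrictAnti ℓ)
    (η : Fin C → ℝ) (y1 y2 : Fin C) (hy : y1 ≠ y2) (hη : η y2 < η y1)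
    (s s' : Fin C → ℝ) (hs : s y2 < s y1)
    (hswap : s' = s ∘ (Equiv.swap y1 y2)) :
    (K : ℝ) * (surrRisk K ℓ η s - surrRisk K ℓ η s')
        = (η y1 - η y2) * ∑ k ∈ Finset.Icc 1 (K + 1),
            (ℓ (s y1 - kthLargest s k) - ℓ (s y2 - kthLargest s k)) ∧
    surrRisk K ℓ η s < surrRisk K ℓ η s' := by
  have hK0 : (0 : ℝ) < K := by exact_mod_cast hK1
  set σ := Equiv.swap y1 y2 with hσ
  set F : Fin C → ℝ := fun y => (1 / (K : ℝ)) *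
      ∑ k ∈ Finset.Icc 1 (K + 1), ℓ (s y - kthLargest s k) with hF
  have hkth : ∀ k, kthLargest s' k = kthLargest s k := by
    intro k; rw [hswap]; exact kthLargest_comp_perm s σ k
  have hrisk' : surrRisk K ℓ η s' = ∑ y : Fin C, η y * F (σ y) := by
    unfold surrRisk
    refine Finset.sum_congr rfl fun y _ => ?_
    simp only [hF, hswap, Function.comp_apply, kthLargest_comp_perm]
  have hrisk : surrRisk K ℓ η s = ∑ y : Fin C, η y * F y := rfl
  have hdiff : surrRisk K ℓ η s - surrRisk K ℓ η s'
      = (η y1 - η y2) * (F y1 - F y2) := by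
    rw [hrisk, hrisk', ← Finset.sum_sub_distrib]
    have hsub : ∀ y : Fin C, η y * F y - η y * F (σ y)
        = η y * (F y - F (σ y)) := fun y => by ring
    simp only [hsub]
    rw [← Finset.sum_subset (Finset.subset_univ ({y1, y2} : Finset (Fin C)))
      (fun y _ hy' => ?_)]
    · rw [Finset.sum_pair hy]
      have h1 : σ y1 = y2 := Equiv.swap_apply_left y1 y2
      have h2 : σ y2 = y1 := Equiv.swap_apply_right y1 y2
      rw [h1, h2]; ring
    · simp only [Finset.mem_insert, Finset.mem_singleton, not_or] at hy'
      have : σ y = y := Equiv.swap_apply_of_ne_of_ne hy'.1 hy'.2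
      rw [this, sub_self, mul_zero]
  have hFsub : F y1 - F y2 = (1 / (K : ℝ)) * ∑ k ∈ Finset.Icc 1 (K + 1),
      (ℓ (s y1 - kthLargest s k) - ℓ (s y2 - kthLargest s k)) := by
    simp only [hF, Finset.sum_sub_distrib]; ring
  have hsumneg : ∑ k ∈ Finset.Icc 1 (K + 1),
      (ℓ (s y1 - kthLargest s k) - ℓ (s y2 - kthLargest s k)) < 0 := by
    refine Finset.sum_neg (fun k _ => ?_) ⟨1, Finset.mem_Icc.mpr ⟨le_refl 1, by omega⟩⟩
    have h1 : s y2 - kthLargest s k < s y1 - kthLargest s k := by linarith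
    have h2 := hanti h1
    linarith
  have heq : (K : ℝ) * (surrRisk K ℓ η s - surrRisk K ℓ η s')
      = (η y1 - η y2) * ∑ k ∈ Finset.Icc 1 (K + 1),
          (ℓ (s y1 - kthLargest s k) - ℓ (s y2 - kthLargest s k)) := by
    rw [hdiff, hFsub]
    field_simp
  refine ⟨heq, ?_⟩
  have hneg : (K : ℝ) * (surrRisk K ℓ η s - surrRisk K ℓ η s') < 0 := by
    rw [heq]
    exact mul_neg_of_pos_of_neg (by linarith) hsumneg
  nlinarith
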